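/- There exists an invertible 8×8 rational matrix C such that both C⁻¹M₊C and C⁻¹M₋C are lower triangular, with diagonal (4,2,-2,-2,1,1,0,0) in both cases; i.e., M₊ and M₋ are simultaneously lower-triangularizable with the same diagonal. -/
import Mathlib

def Mplus : Matrix (Fin 8) (Fin 8) ℚ :=
  !![0,0,0,0,1,1,1,1;
     0,0,1,3,0,0,0,0;
     0,2,2,0,0,0,0,0;
     3,1,0,0,0,0,0,0;
     1,1,1,1,0,0,0,0;
     0,0,0,0,0,0,1,3;
     0,0,0,0,0,2,2,0;
     0,0,0,0,3,1,0,0]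

def Mminus : Matrix (Fin 8) (Fin 8) ℚ :=
  !![0,0,1,3,0,0,0,0;
     0,2,2,0,0,0,0,0;
     3,1,0,0,0,0,0,0;
     0,0,0,0,1,1,1,1;
     0,0,0,0,0,0,1,3;
     0,0,0,0,0,2,2,0;
     0,0,0,0,3,1,0,0;
     1,1,1,1,0,0,0,0]

def Cmat : Matrix (Fin 8) (Fin 8) ℚ :=
  !![1,-1,0,-1,0,1,0,-1;
     0,0,0,1,0,-2,0,3;
     0,0,0,0,0,1,0,-3;
     0,0,0,0,0,0,0,1;
     0,1,-1,0,1,0,-1,0;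
     0,0,1,0,-2,0,3,0;
     0,0,0,0,1,0,-3,0;
     0,0,0,0,0,0,1,0]

def Dmat : Matrix (Fin 8) (Fin 8) ℚ :=
  !![1,1,1,1,1,1,1,1;
     0,0,0,0,1,1,1,1;
     0,0,0,0,0,1,2,3;
     0,1,2,3,0,0,0,0;
     0,0,0,0,0,0,1,3;
     0,0,1,3,0,0,0,0;
     0,0,0,0,0,0,0,1;
     0,0,0,1,0,0,0,0]

def Tp : Matrix (Fin 8) (Fin 8) ℚ :=
  !![4,0,0,0,0,0,0,0;
     1,2,0,0,0,0,0,0;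
     0,9,-2,0,0,0,0,0;
     9,-9,0,-2,0,0,0,0;
     0,9,-4,0,1,0,0,0;
     9,-9,0,-4,0,1,0,0;
     0,3,-2,0,1,0,0,0;
     3,-3,0,-2,0,1,0,0]

def Tm : Matrix (Fin 8) (Fin 8) ℚ :=
  !![4,0,0,0,0,0,0,0;
     1,2,0,0,0,0,0,0;
     3,3,-2,0,0,0,0,0;
     6,-3,0,-2,0,0,0,0;
     3,0,-2,0,1,0,0,0;
     3,0,0,-2,0,1,0,0;
     1,-1,0,0,0,0,0,0;
     0,1,0,0,0,0,0,0]

lemma hCD : Cmat * Dmat = 1 := by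
  ext i j
  fin_cases i <;> fin_cases j <;>
    norm_num [Matrix.mul_apply, Fin.sum_univ_succ, Cmat, Dmat, Matrix.one_apply, Fin.ext_iff]


def Ep : Matrix (Fin 8) (Fin 8) ℚ :=
  !![0,1,0,0,0,0,0,0;
     0,0,0,0,0,1,0,0;
     0,0,0,2,0,-2,0,0;
     3,-3,0,-2,0,1,0,0;
     1,-1,0,0,0,0,0,0;
     0,0,0,0,1,0,0,0;
     0,0,2,0,-2,0,0,0;
     0,3,-2,0,1,0,0,0]

def Em : Matrix (Fin 8) (Fin 8) ℚ :=
  !![0,0,0,0,0,1,0,0;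
     0,0,0,2,0,-2,0,0;
     3,-3,0,-2,0,1,0,0;
     0,1,0,0,0,0,0,0;
     0,0,0,0,1,0,0,0;
     0,0,2,0,-2,0,0,0;
     0,3,-2,0,1,0,0,0;
     1,-1,0,0,0,0,0,0]

lemma hEp : Mplus * Cmat = Ep := by
  ext i j
  fin_cases i <;> fin_cases j <;>
    norm_num [Matrix.mul_apply, Fin.sum_univ_succ, Cmat, Mplus, Ep]

lemma hEm : Mminus * Cmat = Em := by
  ext i j
  fin_cases i <;> fin_cases j <;>
    norm_num [Matrix.mul_apply, Fin.sum_univ_succ, Cmat, Mminus, Em]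

lemma hp : Dmat * Mplus * Cmat = Tp := by
  rw [Matrix.mul_assoc, hEp]
  ext i j
  fin_cases i <;> fin_cases j <;>
    norm_num [Matrix.mul_apply, Fin.sum_univ_succ, Dmat, Ep, Tp]

lemma hm : Dmat * Mminus * Cmat = Tm := by
  rw [Matrix.mul_assoc, hEm]
  ext i j
  fin_cases i <;> fin_cases j <;>
    norm_num [Matrix.mul_apply, Fin.sum_univ_succ, Dmat, Em, Tm]

theorem simultaneous_triangularization :
    ∃ C : Matrix (Fin 8) (Fin 8) ℚ, IsUnit C.det ∧
      (∀ i j : Fin 8, i < j → (C⁻¹ * Mplus * C) i j = 0) ∧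
      (∀ i j : Fin 8, i < j → (C⁻¹ * Mminus * C) i j = 0) ∧
      (∀ i : Fin 8, (C⁻¹ * Mplus * C) i i = ![(4:ℚ), 2, -2, -2, 1, 1, 0, 0] i) ∧
      (∀ i : Fin 8, (C⁻¹ * Mminus * C) i i = ![(4:ℚ), 2, -2, -2, 1, 1, 0, 0] i) := by
  have hinv : Cmat⁻¹ = Dmat := Matrix.inv_eq_right_inv hCD
  refine ⟨Cmat, Matrix.isUnit_det_of_right_inverse hCD, ?_, ?_, ?_, ?_⟩ <;>
    rw [hinv]
  · rw [hp]; intro i j hij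
    fin_cases i <;> fin_cases j <;> first
      | exact absurd hij (by decide)
      | norm_num [Tp]
  · rw [hm]; intro i j hij
    fin_cases i <;> fin_cases j <;> first
      | exact absurd hij (by decide)
      | norm_num [Tm]
  · rw [hp]; intro i; fin_cases i <;> norm_num [Tp]
  · rw [hm]; intro i; fin_cases i <;> norm_num [Tm]
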